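/- Suppose ψ_j are real numbers, j ≥ 0, with ψ_j = o(j^{-1/2} (log j)^{-1}) as j → ∞. Then γ(h) := ∑_{j=0}^∞ ψ_j ψ_{j+h} satisfies γ(h) = o(1/log h) as h → ∞, and also ∑_{j=0}^∞ ψ_{j+h}² = o(1/log h). -/

import Mathlib

open Filter Asymptotics

section helpers
open Finset

private lemma sqrt_sum (n : ℕ) : ∑ j ∈ range (n+1), ((j:ℝ))^(-(1/2:ℝ)) ≤ 2 * Real.sqrt n := by
  induction n with
  | zero => simp [Real.zero_rpow]
  | succ n ih =>
    rw [Finset.sum_range_succ]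
    have h1 : ((n+1 : ℕ):ℝ)^(-(1/2:ℝ)) = (Real.sqrt ((n:ℝ)+1))⁻¹ := by
      rw [Real.rpow_neg (by positivity), ← Real.sqrt_eq_rpow]
      push_cast; ring_nf
    rw [h1]
    have ha := Real.sq_sqrt (by positivity : (0:ℝ) ≤ (n:ℝ))
    have hb := Real.sq_sqrt (by positivity : (0:ℝ) ≤ (n:ℝ)+1)
    have ha0 := Real.sqrt_nonneg (n:ℝ)
    have hb0 : 0 < Real.sqrt ((n:ℝ)+1) := Real.sqrt_pos.2 (by positivity)
    have key : (Real.sqrt ((n:ℝ)+1))⁻¹ ≤ 2 * Real.sqrt ((n:ℝ)+1) - 2 * Real.sqrt (n:ℝ) := by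
      rw [inv_le_iff_one_le_mul₀ hb0]
      nlinarith [sq_nonneg (Real.sqrt ((n:ℝ)+1) - Real.sqrt (n:ℝ))]
    have : Real.sqrt ((n+1:ℕ):ℝ) = Real.sqrt ((n:ℝ)+1) := by push_cast; ring_nf
    rw [this]
    linarith

private lemma sqrt_sum' (n : ℕ) : ∑ j ∈ range n, ((j:ℝ))^(-(1/2:ℝ)) ≤ 2 * Real.sqrt n := by
  cases n with
  | zero => simp
  | succ m =>
    refine (sqrt_sum m).trans ?_
    have : Real.sqrt (m:ℝ) ≤ Real.sqrt ((m+1:ℕ):ℝ) := Real.sqrt_le_sqrt (by push_cast; linarith)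
    linarith

private lemma log_one_le {k : ℕ} (hk : 3 ≤ k) : (1:ℝ) ≤ Real.log k := by
  calc (1:ℝ) ≤ Real.log 3 := by
        rw [Real.le_log_iff_exp_le (by norm_num)]
        calc Real.exp 1 ≤ 2.7182818286 := Real.exp_one_lt_d9.le
          _ ≤ 3 := by norm_num
    _ ≤ Real.log k := Real.log_le_log (by norm_num) (by exact_mod_cast hk)

private lemma bertrand_step {k : ℕ} (hk : 3 ≤ k) :
    ((((k+1:ℕ)):ℝ) * (Real.log ((k+1:ℕ):ℝ))^2)⁻¹ ≤ (Real.log k)⁻¹ - (Real.log ((k+1:ℕ):ℝ))⁻¹ := by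
  have hk1 : (1:ℝ) ≤ Real.log k := log_one_le hk
  have hk2 : (1:ℝ) ≤ Real.log ((k+1:ℕ):ℝ) := log_one_le (by omega)
  set L := Real.log k with hL
  set M := Real.log ((k+1:ℕ):ℝ) with hM
  have hk0 : (0:ℝ) < (k:ℝ) := by exact_mod_cast (by omega : 0 < k)
  have hLM : L ≤ M := Real.log_le_log hk0 (by push_cast; linarith)
  have hdiff : ((k:ℝ)+1)⁻¹ ≤ M - L := by
    have h1 : M - L = Real.log (((k:ℝ)+1)/(k:ℝ)) := by
      rw [Real.log_div (by positivity) (by positivity), hM, hL]; push_cast; ring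
    have h2 := Real.one_sub_inv_le_log_of_pos (show (0:ℝ) < ((k:ℝ)+1)/(k:ℝ) by positivity)
    rw [h1]
    have h3 : 1 - (((k:ℝ)+1)/(k:ℝ))⁻¹ = ((k:ℝ)+1)⁻¹ := by
      field_simp
      ring
    linarith [h3 ▸ h2]
  have hprod : (1:ℝ) ≤ (M - L) * ((k:ℝ)+1) := by
    rw [← div_le_iff₀ (by positivity)] at *
    · calc (1:ℝ)/((k:ℝ)+1) = ((k:ℝ)+1)⁻¹ := one_div _
        _ ≤ M - L := hdiff
  have hL0 : L ≠ 0 := by linarith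
  have hM0 : M ≠ 0 := by linarith
  rw [inv_sub_inv hL0 hM0]
  have hcast : ((k+1:ℕ):ℝ) = (k:ℝ)+1 := by push_cast; ring
  rw [hcast, inv_eq_one_div, div_le_div_iff₀ (by positivity) (by nlinarith)]
  nlinarith [mul_le_mul_of_nonneg_right hprod (sq_nonneg M), mul_le_mul_of_nonneg_right hLM (by linarith : (0:ℝ) ≤ M)]

private lemma log_pred {h : ℕ} (hh : 4 ≤ h) : (Real.log ((h-1:ℕ):ℝ))⁻¹ ≤ 2 / Real.log h := by
  have h1 : (1:ℝ) ≤ Real.log ((h-1:ℕ):ℝ) := log_one_le (by omega)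
  have h2 : (1:ℝ) ≤ Real.log h := log_one_le (by omega)
  have h3 : Real.log h ≤ 2 * Real.log ((h-1:ℕ):ℝ) := by
    have : Real.log (((h-1:ℕ):ℝ)^2) = 2 * Real.log ((h-1:ℕ):ℝ) := by
      rw [Real.log_pow]; push_cast; ring
    rw [← this]
    apply Real.log_le_log (by positivity)
    have hcast : ((h-1:ℕ):ℝ) = (h:ℝ) - 1 := by
      have : (1:ℕ) ≤ h := by omega
      push_cast [this]; ring
    rw [hcast]
    have : (4:ℝ) ≤ (h:ℝ) := by exact_mod_cast hh
    nlinarith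
  rw [inv_eq_one_div, div_le_div_iff₀ (by linarith) (by linarith)]
  linarith

private lemma bertrand_tail {h : ℕ} (hh : 4 ≤ h) (n : ℕ) :
    ∑ j ∈ Finset.Ico h n, ((j:ℝ) * (Real.log j)^2)⁻¹ ≤ 2 / Real.log h := by
  have h2 : (1:ℝ) ≤ Real.log h := log_one_le (by omega)
  rcases le_or_gt n h with hn | hn
  · rw [Finset.Ico_eq_empty (by omega)]
    simp; positivity
  set a : ℕ → ℝ := fun k => (Real.log k)⁻¹ with ha
  have step : ∀ j ∈ Finset.Ico h n, ((j:ℝ) * (Real.log j)^2)⁻¹ ≤ a (j-1) - a j := by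
    intro j hj
    rw [Finset.mem_Ico] at hj
    obtain ⟨k, rfl⟩ : ∃ k, j = k + 1 := ⟨j - 1, by omega⟩
    have : k + 1 - 1 = k := by omega
    rw [this]
    exact bertrand_step (by omega)
  calc ∑ j ∈ Finset.Ico h n, ((j:ℝ) * (Real.log j)^2)⁻¹
      ≤ ∑ j ∈ Finset.Ico h n, (a (j-1) - a j) := Finset.sum_le_sum step
    _ = ∑ i ∈ Finset.range (n-h), (a (h+i-1) - a (h+i)) := by
        rw [Finset.sum_Ico_eq_sum_range]
    _ = ∑ i ∈ Finset.range (n-h), ((fun i => a (i+(h-1))) i - (fun i => a (i+(h-1))) (i+1)) := by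
        apply Finset.sum_congr rfl
        intro i _
        have e1 : h + i - 1 = i + (h-1) := by omega
        have e2 : h + i = (i+1) + (h-1) := by omega
        rw [e1, e2]
    _ = a (0+(h-1)) - a ((n-h)+(h-1)) := Finset.sum_range_sub' _ _
    _ ≤ a (h-1) := by
        have : (1:ℝ) ≤ Real.log (((n-h)+(h-1):ℕ):ℝ) := log_one_le (by omega)
        have : 0 ≤ a ((n-h)+(h-1)) := by
          simp only [ha]; positivity
        simp only [Nat.zero_add]
        linarith
    _ ≤ 2 / Real.log h := log_pred hh

private lemma anti_bound' {x y : ℕ} (h3 : 3 ≤ x) (hxy : x ≤ y) :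
    (y:ℝ)^(-(1/2:ℝ)) * (Real.log y)⁻¹ ≤ (x:ℝ)^(-(1/2:ℝ)) * (Real.log x)⁻¹ := by
  have hx0 : (0:ℝ) < x := by exact_mod_cast (by omega : 0 < x)
  have hy0 : (0:ℝ) < y := by exact_mod_cast (by omega : 0 < y)
  have hxy' : (x:ℝ) ≤ y := by exact_mod_cast hxy
  have h1 : (y:ℝ)^(-(1/2:ℝ)) ≤ (x:ℝ)^(-(1/2:ℝ)) := by
    rw [Real.rpow_neg hx0.le, Real.rpow_neg hy0.le]
    apply inv_anti₀ (by positivity)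
    exact Real.rpow_le_rpow hx0.le hxy' (by norm_num)
  have h2 : (Real.log (y:ℝ))⁻¹ ≤ (Real.log (x:ℝ))⁻¹ := by
    apply inv_anti₀ (by linarith [log_one_le h3])
    exact Real.log_le_log hx0 hxy'
  have hly : (0:ℝ) ≤ (Real.log (y:ℝ))⁻¹ := by
    have := log_one_le (show 3 ≤ y by omega)
    positivity
  exact mul_le_mul h1 h2 hly (by positivity)

private lemma sq_bound (ψ : ℕ → ℝ) (δ : ℝ) (N h : ℕ)
    (hb : ∀ j, N ≤ j → |ψ j| ≤ δ * ((j:ℝ)^(-(1/2:ℝ)) * (Real.log j)⁻¹))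
    (hNh : N ≤ h) (h4 : 4 ≤ h) (n : ℕ) :
    ∑ j ∈ range n, ψ (j+h)^2 ≤ δ^2 * (2 / Real.log h) := by
  have step : ∀ j ∈ range n, ψ (j+h)^2 ≤ δ^2 * (((j+h:ℕ):ℝ) * (Real.log ((j+h:ℕ):ℝ))^2)⁻¹ := by
    intro j _
    have h1 := hb (j+h) (by omega)
    have h2 : ψ (j+h)^2 = |ψ (j+h)|^2 := (sq_abs _).symm
    have hjh0 : (0:ℝ) < ((j+h:ℕ):ℝ) := by exact_mod_cast (by omega : 0 < j+h)
    have hlog : (1:ℝ) ≤ Real.log ((j+h:ℕ):ℝ) := log_one_le (by omega)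
    have h3 : |ψ (j+h)|^2 ≤ (δ * (((j+h:ℕ):ℝ)^(-(1/2:ℝ)) * (Real.log ((j+h:ℕ):ℝ))⁻¹))^2 :=
      pow_le_pow_left₀ (abs_nonneg _) h1 2
    have h4' : (δ * (((j+h:ℕ):ℝ)^(-(1/2:ℝ)) * (Real.log ((j+h:ℕ):ℝ))⁻¹))^2
        = δ^2 * ((((j+h:ℕ):ℝ)^(-(1/2:ℝ)))^2 * ((Real.log ((j+h:ℕ):ℝ))^2)⁻¹) := by
      rw [mul_pow, mul_pow, inv_pow]
    have h5 : ((((j+h:ℕ):ℝ))^(-(1/2:ℝ)))^2 = (((j+h:ℕ):ℝ))⁻¹ := by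
      rw [← Real.rpow_natCast (((j+h:ℕ):ℝ)^(-(1/2:ℝ))) 2, ← Real.rpow_mul hjh0.le]
      norm_num
      exact Real.rpow_neg_one _
    rw [h2]
    calc |ψ (j+h)|^2 ≤ _ := h3
      _ = δ^2 * ((((j+h:ℕ):ℝ))⁻¹ * ((Real.log ((j+h:ℕ):ℝ))^2)⁻¹) := by rw [h4', h5]
      _ = δ^2 * (((j+h:ℕ):ℝ) * (Real.log ((j+h:ℕ):ℝ))^2)⁻¹ := by rw [mul_inv]
  calc ∑ j ∈ range n, ψ (j+h)^2
      ≤ ∑ j ∈ range n, δ^2 * (((j+h:ℕ):ℝ) * (Real.log ((j+h:ℕ):ℝ))^2)⁻¹ :=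
        Finset.sum_le_sum step
    _ = δ^2 * ∑ j ∈ range n, (((j+h:ℕ):ℝ) * (Real.log ((j+h:ℕ):ℝ))^2)⁻¹ := by
        rw [Finset.mul_sum]
    _ = δ^2 * ∑ j ∈ Finset.Ico h (n+h), (((j:ℕ):ℝ) * (Real.log ((j:ℕ):ℝ))^2)⁻¹ := by
        congr 1
        rw [Finset.sum_Ico_eq_sum_range]
        simp only [Nat.add_sub_cancel]
        apply Finset.sum_congr rfl
        intro i _
        rw [Nat.add_comm h i]
    _ ≤ δ^2 * (2 / Real.log h) := by
        apply mul_le_mul_of_nonneg_left (bertrand_tail h4 (n+h)) (sq_nonneg δ)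

private lemma sq_formula (δ : ℝ) (k : ℕ) (hk : 0 < k) :
    (δ * ((k:ℝ)^(-(1/2:ℝ)) * (Real.log k)⁻¹))^2 = δ^2 * ((k:ℝ) * (Real.log k)^2)⁻¹ := by
  have hk0 : (0:ℝ) < (k:ℝ) := by exact_mod_cast hk
  have h5 : (((k:ℝ))^(-(1/2:ℝ)))^2 = ((k:ℝ))⁻¹ := by
    rw [← Real.rpow_natCast (((k:ℝ))^(-(1/2:ℝ))) 2, ← Real.rpow_mul hk0.le]
    norm_num
    exact Real.rpow_neg_one _
  rw [mul_pow, mul_pow, inv_pow, h5, mul_inv]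

private lemma abs_prod_le {a b x y : ℝ} (ha : |a| ≤ x) (hb : |b| ≤ y) : |a*b| ≤ x*y := by
  rw [abs_mul]
  exact mul_le_mul ha hb (abs_nonneg _) ((abs_nonneg a).trans ha)

private lemma prod_bound (ψ : ℕ → ℝ) (δ : ℝ) (N h : ℕ) (hδ0 : 0 ≤ δ) (hN3 : 3 ≤ N)
    (hb : ∀ j, N ≤ j → |ψ j| ≤ δ * ((j:ℝ)^(-(1/2:ℝ)) * (Real.log j)⁻¹))
    (hNh : N ≤ h) (h4 : 4 ≤ h) (n : ℕ) :
    ∑ j ∈ range n, |ψ j * ψ (j+h)| ≤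
      (∑ j ∈ range N, |ψ j|) * (δ * ((h:ℝ)^(-(1/2:ℝ)) * (Real.log h)⁻¹))
        + 4 * δ^2 * (Real.log h)⁻¹ := by
  have h3h : 3 ≤ h := by omega
  have hlogh : (1:ℝ) ≤ Real.log h := log_one_le h3h
  have hh0 : (0:ℝ) < (h:ℝ) := by exact_mod_cast (by omega : 0 < h)
  -- pointwise bound for shifted term
  have hshift : ∀ j : ℕ, |ψ (j+h)| ≤ δ * ((h:ℝ)^(-(1/2:ℝ)) * (Real.log h)⁻¹) := by
    intro j
    refine (hb (j+h) (by omega)).trans ?_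
    exact mul_le_mul_of_nonneg_left (anti_bound' h3h (by omega)) hδ0
  set m := max n h with hm
  have hmono : ∑ j ∈ range n, |ψ j * ψ (j+h)| ≤ ∑ j ∈ range m, |ψ j * ψ (j+h)| :=
    Finset.sum_le_sum_of_subset_of_nonneg (Finset.range_subset_range.2 (le_max_left _ _))
      (fun i _ _ => abs_nonneg _)
  refine hmono.trans ?_
  have hNm : N ≤ m := hNh.trans (le_max_right _ _)
  have hhm : h ≤ m := le_max_right _ _
  rw [← Finset.sum_range_add_sum_Ico _ hNm, ← Finset.sum_Ico_consecutive _ hNh hhm]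
  have boundA : ∑ j ∈ range N, |ψ j * ψ (j+h)|
      ≤ (∑ j ∈ range N, |ψ j|) * (δ * ((h:ℝ)^(-(1/2:ℝ)) * (Real.log h)⁻¹)) := by
    rw [Finset.sum_mul]
    refine Finset.sum_le_sum fun j _ => ?_
    rw [abs_mul]
    exact mul_le_mul_of_nonneg_left (hshift j) (abs_nonneg _)
  have boundB : ∑ j ∈ Finset.Ico N h, |ψ j * ψ (j+h)| ≤ 2 * δ^2 * (Real.log h)⁻¹ := by
    have term : ∀ j ∈ Finset.Ico N h, |ψ j * ψ (j+h)|
        ≤ δ^2 * (((h:ℝ)^(-(1/2:ℝ)) * (Real.log h)⁻¹) * (j:ℝ)^(-(1/2:ℝ))) := by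
      intro j hj
      rw [Finset.mem_Ico] at hj
      have hj3 : 3 ≤ j := le_trans hN3 hj.1
      have hlogj : (1:ℝ) ≤ Real.log j := log_one_le hj3
      have hj1 : |ψ j| ≤ δ * (j:ℝ)^(-(1/2:ℝ)) := by
        refine (hb j hj.1).trans ?_
        have hinv : (Real.log (j:ℝ))⁻¹ ≤ 1 := by
          rw [inv_le_one_iff₀]; right; exact hlogj
        have : (j:ℝ)^(-(1/2:ℝ)) * (Real.log j)⁻¹ ≤ (j:ℝ)^(-(1/2:ℝ)) * 1 :=
          mul_le_mul_of_nonneg_left hinv (by positivity)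
        rw [mul_one] at this
        exact mul_le_mul_of_nonneg_left this hδ0
      calc |ψ j * ψ (j+h)| ≤ (δ * (j:ℝ)^(-(1/2:ℝ))) * (δ * ((h:ℝ)^(-(1/2:ℝ)) * (Real.log h)⁻¹)) :=
            abs_prod_le hj1 (hshift j)
        _ = δ^2 * (((h:ℝ)^(-(1/2:ℝ)) * (Real.log h)⁻¹) * (j:ℝ)^(-(1/2:ℝ))) := by ring
    calc ∑ j ∈ Finset.Ico N h, |ψ j * ψ (j+h)|
        ≤ ∑ j ∈ Finset.Ico N h, δ^2 * (((h:ℝ)^(-(1/2:ℝ)) * (Real.log h)⁻¹) * (j:ℝ)^(-(1/2:ℝ))) :=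
          Finset.sum_le_sum term
      _ = δ^2 * (((h:ℝ)^(-(1/2:ℝ)) * (Real.log h)⁻¹) * ∑ j ∈ Finset.Ico N h, (j:ℝ)^(-(1/2:ℝ))) := by
          rw [← Finset.mul_sum, ← Finset.mul_sum]
      _ ≤ δ^2 * (((h:ℝ)^(-(1/2:ℝ)) * (Real.log h)⁻¹) * (2 * Real.sqrt h)) := by
          apply mul_le_mul_of_nonneg_left _ (sq_nonneg δ)
          apply mul_le_mul_of_nonneg_left _ (by positivity)
          refine le_trans ?_ (sqrt_sum' h)
          exact Finset.sum_le_sum_of_subset_of_nonneg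
            (by rw [Finset.range_eq_Ico]; exact Finset.Ico_subset_Ico (by omega) le_rfl)
            (fun i _ _ => by positivity)
      _ = 2 * δ^2 * (Real.log h)⁻¹ := by
          have hs : (h:ℝ)^(-(1/2:ℝ)) = (Real.sqrt h)⁻¹ := by
            rw [Real.rpow_neg hh0.le, ← Real.sqrt_eq_rpow]
          have hsne : Real.sqrt (h:ℝ) ≠ 0 := by positivity
          rw [hs]
          field_simp
  have boundC : ∑ j ∈ Finset.Ico h m, |ψ j * ψ (j+h)| ≤ 2 * δ^2 * (Real.log h)⁻¹ := by
    have term : ∀ j ∈ Finset.Ico h m, |ψ j * ψ (j+h)|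
        ≤ δ^2 * ((j:ℝ) * (Real.log j)^2)⁻¹ := by
      intro j hj
      rw [Finset.mem_Ico] at hj
      have hj3 : 3 ≤ j := le_trans h3h hj.1
      have h2 : |ψ (j+h)| ≤ δ * ((j:ℝ)^(-(1/2:ℝ)) * (Real.log j)⁻¹) := by
        refine (hb (j+h) (by omega)).trans ?_
        exact mul_le_mul_of_nonneg_left (anti_bound' hj3 (by omega)) hδ0
      calc |ψ j * ψ (j+h)|
          ≤ (δ * ((j:ℝ)^(-(1/2:ℝ)) * (Real.log j)⁻¹)) * (δ * ((j:ℝ)^(-(1/2:ℝ)) * (Real.log j)⁻¹)) :=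
            abs_prod_le (hb j (by omega)) h2
        _ = (δ * ((j:ℝ)^(-(1/2:ℝ)) * (Real.log j)⁻¹))^2 := (sq _).symm
        _ = δ^2 * ((j:ℝ) * (Real.log j)^2)⁻¹ := sq_formula δ j (by omega)
    calc ∑ j ∈ Finset.Ico h m, |ψ j * ψ (j+h)|
        ≤ ∑ j ∈ Finset.Ico h m, δ^2 * ((j:ℝ) * (Real.log j)^2)⁻¹ := Finset.sum_le_sum term
      _ = δ^2 * ∑ j ∈ Finset.Ico h m, ((j:ℝ) * (Real.log j)^2)⁻¹ := by rw [← Finset.mul_sum]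
      _ ≤ δ^2 * (2 / Real.log h) := mul_le_mul_of_nonneg_left (bertrand_tail h4 m) (sq_nonneg δ)
      _ = 2 * δ^2 * (Real.log h)⁻¹ := by rw [div_eq_mul_inv]; ring
  linarith

end helpers

open Finset in
theorem stmt_9 (ψ : ℕ → ℝ)
    (hψ : ψ =o[atTop] fun j : ℕ => (j : ℝ) ^ (-(1 / 2 : ℝ)) * (Real.log j)⁻¹) :
    ((fun h : ℕ => ∑' j : ℕ, ψ j * ψ (j + h)) =o[atTop]
        fun h : ℕ => 1 / Real.log h) ∧
      ((fun h : ℕ => ∑' j : ℕ, ψ (j + h) ^ 2) =o[atTop]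
        fun h : ℕ => 1 / Real.log h) := by
  have key : ∀ c : ℝ, 0 < c → ∀ᶠ h : ℕ in atTop,
      |∑' j : ℕ, ψ j * ψ (j+h)| ≤ c * (1 / Real.log h) ∧
      (∑' j : ℕ, ψ (j+h)^2) ≤ c * (1 / Real.log h) := by
    intro c hc
    set δ := min 1 (Real.sqrt (c/8)) with hδ
    have hδ0 : 0 < δ := lt_min one_pos (Real.sqrt_pos.2 (by positivity))
    have hδsq : δ^2 ≤ c/8 := by
      have h1 : δ ≤ Real.sqrt (c/8) := min_le_right _ _
      have h2 := Real.sq_sqrt (le_of_lt (by positivity : (0:ℝ) < c/8))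
      nlinarith [hδ0.le]
    obtain ⟨N₀, hN₀⟩ := eventually_atTop.mp (isLittleO_iff.mp hψ hδ0)
    set N := max N₀ 3 with hN
    have hN3 : 3 ≤ N := le_max_right _ _
    have hb : ∀ j, N ≤ j → |ψ j| ≤ δ * ((j:ℝ)^(-(1/2:ℝ)) * (Real.log j)⁻¹) := by
      intro j hj
      have h1 := hN₀ j (le_trans (le_max_left _ _) hj)
      have hj3 : 3 ≤ j := le_trans (le_max_right _ _) hj
      have hlogj := log_one_le hj3
      have hnn : 0 ≤ (j:ℝ)^(-(1/2:ℝ)) * (Real.log j)⁻¹ := by positivity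
      rwa [Real.norm_eq_abs, Real.norm_eq_abs, abs_of_nonneg hnn] at h1
    set K := ∑ j ∈ range N, |ψ j| with hK
    have hK0 : 0 ≤ K := Finset.sum_nonneg fun _ _ => abs_nonneg _
    have hev2 : ∀ᶠ h : ℕ in atTop, K * (δ * (h:ℝ)^(-(1/2:ℝ))) < c/2 := by
      have h1 : Tendsto (fun h : ℕ => (h:ℝ)^(-(1/2:ℝ))) atTop (nhds 0) :=
        (tendsto_rpow_neg_atTop (by norm_num : (0:ℝ) < 1/2)).comp tendsto_natCast_atTop_atTop
      have h2 : Tendsto (fun h : ℕ => K * (δ * (h:ℝ)^(-(1/2:ℝ)))) atTop (nhds 0) := by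
        have := (h1.const_mul δ).const_mul K
        simpa using this
      exact h2.eventually_lt_const (by positivity)
    filter_upwards [eventually_ge_atTop (max N 4), hev2] with h hh1 hh2
    have hNh : N ≤ h := le_trans (le_max_left _ _) hh1
    have h4 : 4 ≤ h := le_trans (le_max_right _ _) hh1
    have hlogh : (1:ℝ) ≤ Real.log h := log_one_le (by omega)
    have hloginv : (0:ℝ) ≤ (Real.log h)⁻¹ := by positivity
    have Sb : ∀ n, ∑ j ∈ range n, |ψ j * ψ (j+h)| ≤ c * (1 / Real.log h) := by
      intro n
      refine (prod_bound ψ δ N h hδ0.le hN3 hb hNh h4 n).trans ?_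
      have t1 : (K * (δ * (h:ℝ)^(-(1/2:ℝ)))) * (Real.log h)⁻¹ ≤ (c/2) * (Real.log h)⁻¹ :=
        mul_le_mul_of_nonneg_right hh2.le hloginv
      have t2 : 4 * δ^2 * (Real.log h)⁻¹ ≤ (c/2) * (Real.log h)⁻¹ :=
        mul_le_mul_of_nonneg_right (by nlinarith) hloginv
      calc K * (δ * ((h:ℝ)^(-(1/2:ℝ)) * (Real.log h)⁻¹)) + 4 * δ^2 * (Real.log h)⁻¹
          = (K * (δ * (h:ℝ)^(-(1/2:ℝ)))) * (Real.log h)⁻¹ + 4*δ^2*(Real.log h)⁻¹ := by ring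
        _ ≤ (c/2) * (Real.log h)⁻¹ + (c/2) * (Real.log h)⁻¹ := add_le_add t1 t2
        _ = c * (1/Real.log h) := by rw [one_div]; ring
    refine ⟨?_, ?_⟩
    · have Sb' : ∀ n, ∑ j ∈ range n, |ψ j| * |ψ (j+h)| ≤ c * (1 / Real.log h) := by
        simpa [abs_mul] using Sb
      have habs : Summable (fun j => |ψ j| * |ψ (j+h)|) :=
        summable_of_sum_range_le (fun _ => mul_nonneg (abs_nonneg _) (abs_nonneg _)) Sb'
      have h1 : |∑' j : ℕ, ψ j * ψ (j+h)| ≤ ∑' j : ℕ, |ψ j| * |ψ (j+h)| := by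
        simpa [Real.norm_eq_abs, abs_mul] using
          norm_tsum_le_tsum_norm (f := fun j : ℕ => ψ j * ψ (j+h))
            (by simpa [Real.norm_eq_abs, abs_mul] using habs)
      exact h1.trans (Real.tsum_le_of_sum_range_le
        (fun _ => mul_nonneg (abs_nonneg _) (abs_nonneg _)) Sb')
    · refine Real.tsum_le_of_sum_range_le (fun _ => sq_nonneg _) fun n => ?_
      refine (sq_bound ψ δ N h hb hNh h4 n).trans ?_
      rw [div_eq_mul_inv, one_div]
      nlinarith
  constructor
  · rw [isLittleO_iff]
    intro c hc
    filter_upwards [key c hc, eventually_ge_atTop 3] with h hk h3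
    rw [Real.norm_eq_abs, Real.norm_eq_abs,
      abs_of_nonneg (by have := log_one_le h3; positivity : (0:ℝ) ≤ 1 / Real.log h)]
    exact hk.1
  · rw [isLittleO_iff]
    intro c hc
    filter_upwards [key c hc, eventually_ge_atTop 3] with h hk h3
    rw [Real.norm_eq_abs, Real.norm_eq_abs,
      abs_of_nonneg (by have := log_one_le h3; positivity : (0:ℝ) ≤ 1 / Real.log h),
      abs_of_nonneg (tsum_nonneg fun _ => sq_nonneg _)]
    exact hk.2
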